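/- arXiv:2010.10012 — 4 statements merged into one kernel-verified Lean document; each statement's English description precedes it below -/
import Mathlib

section
/- Let T : ({0,1}^k) → List (Fin k × Bool) be a non-clashing teacher for the powerset hypothesis class H = {0,1}^k (viewing hypotheses as functions Fin k → Bool): for all distinct h, h', it is not the case that h is consistent with every example in T(h') and h' is consistent with every example in T(h). Then for any h and any j ∈ Fin k, letting h' = h with coordinate j flipped, either (j, h j) appears in T(h) or (j, h' j) appears in T(h'). -/
/-- For a non-clashing teacher on the powerset class `{0,1}^k`, for every `h` and
coordinate `j`, either `(j, h j)` appears in `T h`, or `(j, h' j)` appears in `T h'`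
where `h'` is `h` with coordinate `j` flipped. -/
theorem nonclashing_neighbor_example {k : ℕ}
    (T : (Fin k → Bool) → List (Fin k × Bool))
    (hcons : ∀ (h : Fin k → Bool), ∀ z ∈ T h, h z.1 = z.2)
    (hnc : ∀ h h' : Fin k → Bool, h ≠ h' →
      ¬((∀ z ∈ T h', h z.1 = z.2) ∧ (∀ z ∈ T h, h' z.1 = z.2)))
    (h : Fin k → Bool) (j : Fin k) :
    (j, h j) ∈ T h ∨
      (j, (Function.update h j (!(h j))) j) ∈ T (Function.update h j (!(h j))) := by
  set h' := Function.update h j (!(h j)) with hh'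
  have hne : h ≠ h' := by
    intro e
    have := congrFun e j
    simp [hh', Function.update_self] at this
  have key := hnc h h' hne
  rw [not_and_or] at key
  rcases key with key | key
  · right
    push_neg at key
    obtain ⟨z, hz, hzne⟩ := key
    have hz2 : h' z.1 = z.2 := hcons h' z hz
    have hj : z.1 = j := by
      by_contra hne'
      exact hzne (by rw [← hz2, hh', Function.update_of_ne hne'])
    have : z = (j, h' j) := by
      cases z; simp_all
    rwa [← this]
  · left
    push_neg at key
    obtain ⟨z, hz, hzne⟩ := key
    have hz2 : h z.1 = z.2 := hcons h z hz
    have hj : z.1 = j := by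
      by_contra hne'
      exact hzne (by rw [← hz2, hh', Function.update_of_ne hne'])
    have : z = (j, h j) := by
      cases z; simp_all
    rwa [← this]
end

section
/- Any non-clashing teacher T for the powerset hypothesis class H = {0,1}^k satisfies Σ_{h ∈ H} |T(h)| ≥ k · 2^k / 2, i.e., 2 · Σ_{h ∈ H} |T(h)| ≥ k · 2^k. -/
/-- Any non-clashing teacher for the powerset class `{0,1}^k` satisfies
`2 · Σ_h |T h| ≥ k · 2^k`. -/
theorem nonclashing_total_size_lower_bound {k : ℕ}
    (T : (Fin k → Bool) → List (Fin k × Bool))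
    (hcons : ∀ (h : Fin k → Bool), ∀ z ∈ T h, h z.1 = z.2)
    (hnc : ∀ h h' : Fin k → Bool, h ≠ h' →
      ¬((∀ z ∈ T h', h z.1 = z.2) ∧ (∀ z ∈ T h, h' z.1 = z.2))) :
    2 * ∑ h : Fin k → Bool, (T h).length ≥ k * 2 ^ k := by
  classical
  -- flip at coordinate i
  set flip : (Fin k → Bool) → Fin k → (Fin k → Bool) :=
    fun h i => Function.update h i (!(h i)) with hflip
  have flip_invol : ∀ i h, flip (flip h i) i = h := by
    intro i h
    funext j
    by_cases hj : j = i
    · subst hj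
      simp [hflip, Function.update_self]
    · simp [hflip, Function.update_of_ne hj]
  -- indicator for "T h has an example at coordinate i"
  set F : (Fin k → Bool) → Fin k → ℕ :=
    fun h i => if ∃ z ∈ T h, z.1 = i then 1 else 0 with hF
  -- key: for each h, i, at least one of T h, T (flip h i) has example at i
  have key : ∀ h i, 1 ≤ F h i + F (flip h i) i := by
    intro h i
    by_contra hlt
    push_neg at hlt
    have hlt' : (if ∃ z ∈ T h, z.1 = i then 1 else 0)
        + (if ∃ z ∈ T (flip h i), z.1 = i then (1:ℕ) else 0) < 1 := hlt
    have h1 : ¬ ∃ z ∈ T h, z.1 = i := by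
      intro hx; rw [if_pos hx] at hlt'; omega
    have h2 : ¬ ∃ z ∈ T (flip h i), z.1 = i := by
      intro hx; rw [if_pos hx] at hlt'; omega
    have hne : h ≠ flip h i := by
      intro he
      have := congrFun he i
      simp [hflip, Function.update_self] at this
    apply hnc h (flip h i) hne
    constructor
    · intro z hz
      have hzi : z.1 ≠ i := fun he => h2 ⟨z, hz, he⟩
      have := hcons (flip h i) z hz
      simp only [hflip, Function.update_of_ne hzi] at this
      exact this
    · intro z hz
      have hzi : z.1 ≠ i := fun he => h1 ⟨z, hz, he⟩
      have := hcons h z hz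
      simp only [hflip, Function.update_of_ne hzi]
      exact this
  -- per-hypothesis bound: Σ_i F h i ≤ |T h|
  have per : ∀ h, ∑ i : Fin k, F h i ≤ (T h).length := by
    intro h
    have : ∑ i : Fin k, F h i
        = (Finset.univ.filter (fun i => ∃ z ∈ T h, z.1 = i)).card := by
      simp [hF, Finset.sum_boole]
    rw [this]
    have hsub : Finset.univ.filter (fun i => ∃ z ∈ T h, z.1 = i)
        ⊆ ((T h).map Prod.fst).toFinset := by
      intro i hi
      simp only [Finset.mem_filter] at hi
      obtain ⟨_, z, hz, hzi⟩ := hi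
      simp only [List.mem_toFinset, List.mem_map]
      exact ⟨z, hz, hzi⟩
    calc (Finset.univ.filter (fun i => ∃ z ∈ T h, z.1 = i)).card
        ≤ ((T h).map Prod.fst).toFinset.card := Finset.card_le_card hsub
      _ ≤ ((T h).map Prod.fst).length := List.toFinset_card_le _
      _ = (T h).length := List.length_map _
  -- reindexing: for fixed i, summing F (flip h i) i over h equals summing F h i
  have reidx : ∀ i : Fin k,
      ∑ h : Fin k → Bool, F (flip h i) i = ∑ h : Fin k → Bool, F h i := by
    intro i
    have hinv : Function.Involutive (fun h => flip h i) := flip_invol i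
    exact Fintype.sum_bijective _ hinv.bijective _ _ (fun h => rfl)
  have card2 : Fintype.card (Fin k → Bool) = 2 ^ k := by
    simp [Fintype.card_fun]
  calc k * 2 ^ k = ∑ _h : Fin k → Bool, ∑ _i : Fin k, 1 := by
        simp [card2, Nat.mul_comm]
    _ ≤ ∑ h : Fin k → Bool, ∑ i : Fin k, (F h i + F (flip h i) i) := by
        apply Finset.sum_le_sum; intro h _
        apply Finset.sum_le_sum; intro i _
        exact key h i
    _ = (∑ h : Fin k → Bool, ∑ i : Fin k, F h i)
        + ∑ i : Fin k, ∑ h : Fin k → Bool, F (flip h i) i := by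
        simp only [Finset.sum_add_distrib]
        congr 1
        exact Finset.sum_comm
    _ = 2 * ∑ h : Fin k → Bool, ∑ i : Fin k, F h i := by
        simp only [reidx]
        rw [Finset.sum_comm]
        ring
    _ ≤ 2 * ∑ h : Fin k → Bool, (T h).length := by
        apply Nat.mul_le_mul_left
        exact Finset.sum_le_sum (fun h _ => per h)
end

section
/- For any non-clashing teacher T for the powerset hypothesis class H = {0,1}^k, there exists a hypothesis h ∈ H with |T(h)| ≥ ⌈k/2⌉. Consequently the non-clashing teaching dimension of {0,1}^k is at least ⌈k/2⌉. -/
set_option synthInstance.maxHeartbeats 1000000 in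
set_option maxHeartbeats 1000000 in
/-- For any non-clashing teacher for `{0,1}^k`, some hypothesis has a teaching list of
length at least `⌈k/2⌉`; hence `NCTD({0,1}^k) ≥ ⌈k/2⌉`. -/
theorem nonclashing_exists_large_teaching_set {k : ℕ}
    (T : (Fin k → Bool) → List (Fin k × Bool))
    (hcons : ∀ (h : Fin k → Bool), ∀ z ∈ T h, h z.1 = z.2)
    (hnc : ∀ h h' : Fin k → Bool, h ≠ h' →
      ¬((∀ z ∈ T h', h z.1 = z.2) ∧ (∀ z ∈ T h, h' z.1 = z.2))) :
    ∃ h : Fin k → Bool, (T h).length ≥ (k + 1) / 2 := by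
  classical
  set S : (Fin k → Bool) → Finset (Fin k) :=
    fun h => ((T h).map Prod.fst).toFinset with hSdef
  have hmemS : ∀ (g : Fin k → Bool) (i : Fin k),
      i ∈ S g ↔ ∃ z ∈ T g, z.1 = i := by
    intro g i
    simp [hSdef, List.mem_map]
  have hScard : ∀ g, (S g).card ≤ (T g).length := by
    intro g
    calc (S g).card ≤ ((T g).map Prod.fst).length := List.toFinset_card_le _
      _ = (T g).length := List.length_map _
  set flip : (Fin k → Bool) → Fin k → (Fin k → Bool) :=
    fun h i => Function.update h i (!(h i)) with hflipdef
  have hflipflip : ∀ (h : Fin k → Bool) (i : Fin k), flip (flip h i) i = h := by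
    intro h i
    funext j
    by_cases hji : j = i
    · subst hji
      simp [hflipdef, Function.update_self]
    · simp [hflipdef, Function.update_of_ne hji]
  have hflipne : ∀ (h : Fin k → Bool) (i : Fin k), h ≠ flip h i := by
    intro h i he
    have := congrFun he i
    simp [hflipdef, Function.update_self] at this
  have hcover : ∀ (h : Fin k → Bool) (i : Fin k), i ∈ S h ∨ i ∈ S (flip h i) := by
    intro h i
    by_contra hcon
    push_neg at hcon
    obtain ⟨h1, h2⟩ := hcon
    apply hnc h (flip h i) (hflipne h i)
    constructor
    · intro z hz
      have hz1 : z.1 ≠ i := by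
        intro he
        exact h2 ((hmemS (flip h i) i).2 ⟨z, hz, he⟩)
      have : flip h i z.1 = z.2 := hcons (flip h i) z hz
      simpa [hflipdef, Function.update_of_ne hz1] using this
    · intro z hz
      have hz1 : z.1 ≠ i := by
        intro he
        exact h1 ((hmemS h i).2 ⟨z, hz, he⟩)
      have : h z.1 = z.2 := hcons h z hz
      rw [hflipdef]
      simpa [Function.update_of_ne hz1] using this
  -- maximal teaching list
  obtain ⟨h₀, -, hmax⟩ := Finset.exists_max_image (Finset.univ : Finset (Fin k → Bool))
    (fun g => (T g).length) Finset.univ_nonempty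
  refine ⟨h₀, ?_⟩
  set L := (T h₀).length with hL
  -- counting
  set σ : ((Fin k → Bool) × Fin k) → ((Fin k → Bool) × Fin k) :=
    fun p => (flip p.1 p.2, p.2) with hσdef
  set B : Finset ((Fin k → Bool) × Fin k) :=
    Finset.univ.filter (fun p => p.2 ∈ S p.1) with hBdef
  have hsub : (Finset.univ : Finset ((Fin k → Bool) × Fin k)) ⊆ B ∪ B.image σ := by
    intro p _
    rcases hcover p.1 p.2 with hp | hp
    · exact Finset.mem_union_left _ (by simp [hBdef, hp])
    · refine Finset.mem_union_right _ ?_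
      refine Finset.mem_image.2 ⟨(flip p.1 p.2, p.2), ?_, ?_⟩
      · simp [hBdef, hp]
      · simp [hσdef, hflipflip]
  have hcard1 : 2 ^ k * k ≤ 2 * B.card := by
    have h1 : (Finset.univ : Finset ((Fin k → Bool) × Fin k)).card = 2 ^ k * k := by
      rw [Finset.card_univ, Fintype.card_prod, Fintype.card_fun]
      simp
    have h2 := Finset.card_le_card hsub
    have h3 : (B ∪ B.image σ).card ≤ B.card + (B.image σ).card :=
      Finset.card_union_le _ _
    have h4 : (B.image σ).card ≤ B.card := Finset.card_image_le
    omega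
  have hcard2 : B.card ≤ 2 ^ k * L := by
    have hsub2 : B ⊆ Finset.univ.biUnion (fun g => (S g).image (fun i => (g, i))) := by
      intro p hp
      simp only [hBdef, Finset.mem_filter] at hp
      refine Finset.mem_biUnion.2 ⟨p.1, Finset.mem_univ _, ?_⟩
      exact Finset.mem_image.2 ⟨p.2, hp.2, rfl⟩
    calc B.card ≤ (Finset.univ.biUnion (fun g => (S g).image (fun i => (g, i)))).card :=
          Finset.card_le_card hsub2
      _ ≤ ∑ g : Fin k → Bool, ((S g).image (fun i => (g, i))).card :=
          Finset.card_biUnion_le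
      _ ≤ ∑ g : Fin k → Bool, L := by
          refine Finset.sum_le_sum fun g _ => ?_
          calc ((S g).image (fun i => (g, i))).card ≤ (S g).card := Finset.card_image_le
            _ ≤ (T g).length := hScard g
            _ ≤ L := hmax g (Finset.mem_univ g)
      _ = 2 ^ k * L := by simp [Finset.card_univ, mul_comm]
  have hk : k ≤ 2 * L := by
    have : 2 ^ k * k ≤ 2 ^ k * (2 * L) := by
      calc 2 ^ k * k ≤ 2 * B.card := hcard1
        _ ≤ 2 * (2 ^ k * L) := by omega
        _ = 2 ^ k * (2 * L) := by ring
    exact Nat.le_of_mul_le_mul_left this (by positivity)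
  omega
end

section
/- Let T be a non-clashing teacher for H = {0,1}^k. Define for each ordered pair (h, j) with j ∈ Fin k the indicator that (j, h j) ∈ T(h). Summing the observation that for each unordered pair {h, h ⊕ e_j} at least one of the two indicators is 1, over all k·2^{k−1} such pairs, yields Σ_h |T(h)| ≥ k·2^{k−1}, using that |T(h)| is at least the number of distinct instances j with (j, h j) ∈ T(h). -/
/-- For a non-clashing teacher `T : {0,1}^k → Finset (Fin k × Bool)`, summing over all
`k·2^{k−1}` neighbor pairs `{h, h ⊕ e_j}` yields `Σ_h |T h| ≥ k·2^{k−1}`. -/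
theorem nonclashing_finset_total_lower_bound {k : ℕ}
    (T : (Fin k → Bool) → Finset (Fin k × Bool))
    (hcons : ∀ (h : Fin k → Bool), ∀ z ∈ T h, h z.1 = z.2)
    (hnc : ∀ h h' : Fin k → Bool, h ≠ h' →
      ¬((∀ z ∈ T h', h z.1 = z.2) ∧ (∀ z ∈ T h, h' z.1 = z.2))) :
    ∑ h : Fin k → Bool, (T h).card ≥ k * 2 ^ (k - 1) := by
  classical
  set f : (Fin k → Bool) → Fin k → ℕ :=
    fun h j => if (j, h j) ∈ T h then 1 else 0 with hf
  set flip : Fin k → (Fin k → Bool) → (Fin k → Bool) :=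
    fun j h => Function.update h j (!h j) with hflip
  have hinv : ∀ j, Function.Involutive (flip j) := by
    intro j h
    funext i
    by_cases hij : i = j
    · subst hij; simp [hflip, Function.update_self]
    · simp [hflip, Function.update_of_ne hij]
  -- key pair inequality
  have key : ∀ (h : Fin k → Bool) (j : Fin k), 1 ≤ f h j + f (flip j h) j := by
    intro h j
    by_contra hlt
    push_neg at hlt
    have h1 : (j, h j) ∉ T h := by
      by_contra hm; simp [hf, hm] at hlt
    have h2 : (j, (flip j h) j) ∉ T (flip j h) := by
      by_contra hm; simp [hf, hm] at hlt
    have hne : h ≠ flip j h := by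
      intro he
      have : h j = (flip j h) j := by rw [← he]
      simp [hflip, Function.update_self] at this
    refine hnc h (flip j h) hne ⟨?_, ?_⟩
    · intro z hz
      have hz2 := hcons _ z hz
      by_cases hij : z.1 = j
      · exfalso
        apply h2
        obtain ⟨a, b⟩ := z
        simp only at hij hz2
        subst hij
        rw [hz2]
        exact hz
      · rw [← hz2]
        simp [hflip, Function.update_of_ne hij]
    · intro z hz
      have hz2 := hcons _ z hz
      by_cases hij : z.1 = j
      · exfalso
        apply h1
        obtain ⟨a, b⟩ := z
        simp only at hij hz2
        subst hij
        rw [hz2]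
        exact hz
      · rw [← hz2]
        simp [hflip, Function.update_of_ne hij]
  -- per-coordinate bound
  have perj : ∀ j : Fin k, 2 ^ (k - 1) ≤ ∑ h : Fin k → Bool, f h j := by
    intro j
    have hk : 1 ≤ k := j.pos
    have hre : ∑ h : Fin k → Bool, f (flip j h) j = ∑ h : Fin k → Bool, f h j :=
      Fintype.sum_equiv ((hinv j).toPerm) _ _ (fun h => rfl)
    have h2 : 2 ^ k ≤ 2 * ∑ h : Fin k → Bool, f h j := by
      have := Finset.sum_le_sum (fun h (_ : h ∈ Finset.univ) => key h j)
      calc 2 ^ k = ∑ _h : Fin k → Bool, 1 := by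
            simp [Finset.card_univ]
        _ ≤ ∑ h : Fin k → Bool, (f h j + f (flip j h) j) := this
        _ = 2 * ∑ h : Fin k → Bool, f h j := by
            rw [Finset.sum_add_distrib, hre]; ring
    have : 2 * 2 ^ (k - 1) ≤ 2 * ∑ h : Fin k → Bool, f h j := by
      calc 2 * 2 ^ (k - 1) = 2 ^ k := by
            rw [← pow_succ']
            congr 1
            omega
        _ ≤ _ := h2
    omega
  -- count bound per h
  have cnt : ∀ h : Fin k → Bool, ∑ j : Fin k, f h j ≤ (T h).card := by
    intro h
    have : ∑ j : Fin k, f h j =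
        (Finset.univ.filter (fun j : Fin k => (j, h j) ∈ T h)).card := by
      simp only [hf, Finset.card_filter]
    rw [this]
    apply Finset.card_le_card_of_injOn (fun j => (j, h j))
    · intro j hj
      simpa using (Finset.mem_filter.mp hj).2
    · intro a _ b _ hab
      exact (Prod.mk.injEq _ _ _ _ ▸ hab).1
  calc k * 2 ^ (k - 1) = ∑ _j : Fin k, 2 ^ (k - 1) := by simp
    _ ≤ ∑ j : Fin k, ∑ h : Fin k → Bool, f h j := Finset.sum_le_sum (fun j _ => perj j)
    _ = ∑ h : Fin k → Bool, ∑ j : Fin k, f h j := Finset.sum_comm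
    _ ≤ ∑ h : Fin k → Bool, (T h).card := Finset.sum_le_sum (fun h _ => cnt h)
end
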